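/- Let P be an invertible Hermitian n×n matrix with block decompositions P = [[P₁₁, P₁₂],[P₂₁, P₂₂]] and P⁻¹ = [[P̃₁₁, P̃₁₂],[P̃₂₁, P̃₂₂]], conformal with P₂₂, P̃₂₂ of size k×k. If P̃₂₂ is negative semidefinite, then the number of negative eigenvalues of P₁₁ equals (number of negative eigenvalues of P) minus k. -/

import Mathlib

open scoped ComplexOrder
set_option maxHeartbeats 1000000
set_option synthInstance.maxHeartbeats 1000000
set_option linter.unusedSectionVars false
set_option linter.unusedVariables false
open Matrix Module

noncomputable section

namespace Stmt16Aux

variable {ι : Type*} [Fintype ι] [DecidableEq ι]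

/-- quadratic form of a matrix -/
def q (A : Matrix ι ι ℂ) (x : ι → ℂ) : ℂ := dotProduct (star x) (A *ᵥ x)

variable {A : Matrix ι ι ℂ} (hA : A.IsHermitian)

/-- eigenbasis as a basis of the plain pi type -/
def B (hA : A.IsHermitian) : Basis ι ℂ (ι → ℂ) :=
  hA.eigenvectorBasis.toBasis.map (WithLp.linearEquiv 2 ℂ (ι → ℂ))

lemma B_apply (i : ι) : B hA i = ⇑(hA.eigenvectorBasis i) := by
  simp [B, Basis.map_apply]

lemma mulVec_B (i : ι) : A *ᵥ B hA i = (hA.eigenvalues i : ℂ) • B hA i := by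
  rw [B_apply, hA.mulVec_eigenvectorBasis]
  ext j; simp

lemma star_B_dot (i j : ι) :
    star (B hA i) ⬝ᵥ B hA j = if i = j then 1 else 0 := by
  rw [B_apply, B_apply]
  rw [show (star ⇑(hA.eigenvectorBasis i) ⬝ᵥ ⇑(hA.eigenvectorBasis j) : ℂ)
      = (inner ℂ (hA.eigenvectorBasis i) (hA.eigenvectorBasis j) : ℂ) from by
        rw [EuclideanSpace.inner_eq_star_dotProduct, dotProduct_comm]]
  exact orthonormal_iff_ite.mp hA.eigenvectorBasis.orthonormal i j

lemma dotProduct_sum' (v : ι → ℂ) (f : ι → ι → ℂ) :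
    v ⬝ᵥ (∑ i, f i) = ∑ i, v ⬝ᵥ f i := by
  simp only [dotProduct, Finset.sum_apply, Finset.mul_sum]
  exact Finset.sum_comm

lemma repr_eq (x : ι → ℂ) (j : ι) :
    star (B hA j) ⬝ᵥ x = (B hA).repr x j := by
  conv_lhs => rw [← (B hA).sum_repr x]
  rw [show (∑ i, (B hA).repr x i • B hA i) = ∑ i, ((B hA).repr x i • B hA i) from rfl,
    dotProduct_sum']
  simp [star_B_dot]

lemma q_eq_sum (x : ι → ℂ) :
    q A x = ↑(∑ i, hA.eigenvalues i * Complex.normSq ((B hA).repr x i)) := by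
  set c : ι → ℂ := fun i => (B hA).repr x i with hc
  have hx : x = ∑ i, c i • B hA i := ((B hA).sum_repr x).symm
  have hAx : A *ᵥ x = ∑ i, (c i * (hA.eigenvalues i : ℂ)) • B hA i := by
    conv_lhs => rw [hx, ← Matrix.mulVecLin_apply, map_sum]
    refine Finset.sum_congr rfl fun i _ => ?_
    rw [LinearMap.map_smul, Matrix.mulVecLin_apply, mulVec_B, smul_smul]
  have hsx : ∀ j, star x ⬝ᵥ B hA j = star (c j) := by
    intro j
    rw [Matrix.star_dotProduct, repr_eq]
  rw [q, hAx, dotProduct_sum']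
  simp only [dotProduct_smul, smul_eq_mul, hsx]
  rw [Complex.ofReal_sum]
  refine Finset.sum_congr rfl fun i _ => ?_
  rw [Complex.ofReal_mul, mul_comm (c i) _, mul_assoc]
  congr 1
  rw [show (star (c i) : ℂ) = starRingEnd ℂ (c i) from rfl, Complex.mul_conj]


/-- span of eigenvectors with index in `s` -/
def S (hA : A.IsHermitian) (s : Set ι) : Submodule ℂ (ι → ℂ) :=
  Submodule.span ℂ (⇑(B hA) '' s)

lemma mem_S {s : Set ι} {x : ι → ℂ} :
    x ∈ S hA s ↔ ∀ i ∉ s, (B hA).repr x i = 0 := by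
  rw [S, Basis.mem_span_image, Finsupp.support_subset_iff]

lemma finrank_S (s : Set ι) [Fintype s] :
    Module.finrank ℂ (S hA s) = Fintype.card s := by
  rw [S, Set.image_eq_range]
  exact finrank_span_eq_card ((B hA).linearIndependent.comp _ Subtype.val_injective)

lemma q_nonneg {s : Set ι} (hs : ∀ i ∈ s, 0 ≤ hA.eigenvalues i) {x : ι → ℂ}
    (hx : x ∈ S hA s) : 0 ≤ q A x := by
  rw [q_eq_sum hA, ← Complex.ofReal_zero, Complex.real_le_real]
  refine Finset.sum_nonneg fun i _ => ?_
  by_cases h : i ∈ s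
  · exact mul_nonneg (hs i h) (Complex.normSq_nonneg _)
  · rw [(mem_S hA).mp hx i h]; simp

lemma q_nonpos {s : Set ι} (hs : ∀ i ∈ s, hA.eigenvalues i ≤ 0) {x : ι → ℂ}
    (hx : x ∈ S hA s) : q A x ≤ 0 := by
  rw [q_eq_sum hA, ← Complex.ofReal_zero, Complex.real_le_real]
  refine Finset.sum_nonpos fun i _ => ?_
  by_cases h : i ∈ s
  · exact mul_nonpos_of_nonpos_of_nonneg (hs i h) (Complex.normSq_nonneg _)
  · rw [(mem_S hA).mp hx i h]; simp

lemma exists_coord {s : Set ι} {x : ι → ℂ} (hx : x ∈ S hA s) (hx0 : x ≠ 0) :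
    ∃ i ∈ s, (B hA).repr x i ≠ 0 := by
  have h1 : (B hA).repr x ≠ 0 := by
    simpa using (B hA).repr.map_ne_zero_iff.mpr hx0
  obtain ⟨i, hi⟩ := Finsupp.ne_iff.mp h1
  refine ⟨i, ?_, by simpa using hi⟩
  by_contra h
  exact hi (by simpa using (mem_S hA).mp hx i h)

lemma q_pos {s : Set ι} (hs : ∀ i ∈ s, 0 < hA.eigenvalues i) {x : ι → ℂ}
    (hx : x ∈ S hA s) (hx0 : x ≠ 0) : 0 < q A x := by
  rw [q_eq_sum hA, ← Complex.ofReal_zero, Complex.real_lt_real]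
  obtain ⟨i₀, hi₀s, hi₀⟩ := exists_coord hA hx hx0
  rw [← Finset.sum_const_zero (s := (Finset.univ : Finset ι))]
  refine Finset.sum_lt_sum (fun i _ => ?_) ⟨i₀, Finset.mem_univ _, ?_⟩
  · by_cases h : i ∈ s
    · exact mul_nonneg (hs i h).le (Complex.normSq_nonneg _)
    · rw [(mem_S hA).mp hx i h]; simp
  · exact mul_pos (hs i₀ hi₀s) (Complex.normSq_pos.mpr hi₀)

lemma q_neg {s : Set ι} (hs : ∀ i ∈ s, hA.eigenvalues i < 0) {x : ι → ℂ}
    (hx : x ∈ S hA s) (hx0 : x ≠ 0) : q A x < 0 := by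
  rw [q_eq_sum hA, ← Complex.ofReal_zero, Complex.real_lt_real]
  obtain ⟨i₀, hi₀s, hi₀⟩ := exists_coord hA hx hx0
  rw [← Finset.sum_const_zero (s := (Finset.univ : Finset ι))]
  refine Finset.sum_lt_sum (fun i _ => ?_) ⟨i₀, Finset.mem_univ _, ?_⟩
  · by_cases h : i ∈ s
    · exact mul_nonpos_of_nonpos_of_nonneg (hs i h).le (Complex.normSq_nonneg _)
    · rw [(mem_S hA).mp hx i h]; simp
  · exact mul_neg_of_neg_of_pos (hs i₀ hi₀s) (Complex.normSq_pos.mpr hi₀)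

/-- any strictly negative subspace has dim at most the number of negative eigenvalues -/
lemma finrank_le_negCount (U : Submodule ℂ (ι → ℂ))
    (hU : ∀ x ∈ U, x ≠ 0 → q A x < 0) :
    Module.finrank ℂ U ≤ Fintype.card {i // hA.eigenvalues i < 0} := by
  classical
  set Sp := S hA {i | 0 ≤ hA.eigenvalues i} with hSp
  have hdisj : U ⊓ Sp = ⊥ := by
    rw [Submodule.eq_bot_iff]
    rintro x ⟨hxU, hxS⟩
    by_contra h0
    exact (hU x hxU h0).not_ge (q_nonneg hA (fun i hi => hi) hxS)
  have hsum := Submodule.finrank_sup_add_finrank_inf_eq U Sp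
  rw [hdisj, finrank_bot] at hsum
  have h1 : Module.finrank ℂ ↥(U ⊔ Sp) ≤ Fintype.card ι := by
    simpa [Module.finrank_fintype_fun_eq_card] using (U ⊔ Sp).finrank_le
  have h2 : Module.finrank ℂ Sp = Fintype.card {i // 0 ≤ hA.eigenvalues i} :=
    finrank_S hA _
  have h4 : Fintype.card {i // 0 ≤ hA.eigenvalues i}
      = Fintype.card {i // ¬ hA.eigenvalues i < 0} :=
    Fintype.card_congr (Equiv.subtypeEquivRight (fun i => by simp [not_lt]))
  have h5 := Fintype.card_subtype_compl (α := ι) (fun i => hA.eigenvalues i < 0)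
  have h6 := Fintype.card_subtype_le (fun i : ι => hA.eigenvalues i < 0)
  omega


/-- with no zero eigenvalues, any nonpositive subspace has dim at most the number of
negative eigenvalues -/
lemma finrank_le_negCount' (hinv : ∀ i, hA.eigenvalues i ≠ 0) (U : Submodule ℂ (ι → ℂ))
    (hU : ∀ x ∈ U, q A x ≤ 0) :
    Module.finrank ℂ U ≤ Fintype.card {i // hA.eigenvalues i < 0} := by
  classical
  set Sp := S hA {i | 0 < hA.eigenvalues i} with hSp
  have hdisj : U ⊓ Sp = ⊥ := by
    rw [Submodule.eq_bot_iff]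
    rintro x ⟨hxU, hxS⟩
    by_contra h0
    exact (q_pos hA (fun i hi => hi) hxS h0).not_ge (hU x hxU)
  have hsum := Submodule.finrank_sup_add_finrank_inf_eq U Sp
  rw [hdisj, finrank_bot] at hsum
  have h1 : Module.finrank ℂ ↥(U ⊔ Sp) ≤ Fintype.card ι := by
    simpa [Module.finrank_fintype_fun_eq_card] using (U ⊔ Sp).finrank_le
  have h2 : Module.finrank ℂ Sp = Fintype.card {i // 0 < hA.eigenvalues i} :=
    finrank_S hA _
  have h4 : Fintype.card {i // 0 < hA.eigenvalues i}
      = Fintype.card {i // ¬ hA.eigenvalues i < 0} :=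
    Fintype.card_congr (Equiv.subtypeEquivRight (fun i => by
      constructor
      · intro h; simp [not_lt, h.le]
      · intro h; exact lt_of_le_of_ne (not_lt.mp h) (Ne.symm (hinv i))))
  have h5 := Fintype.card_subtype_compl (α := ι) (fun i => hA.eigenvalues i < 0)
  have h6 := Fintype.card_subtype_le (fun i : ι => hA.eigenvalues i < 0)
  omega

/-- the negative eigenspace span -/
def negSpace (hA : A.IsHermitian) : Submodule ℂ (ι → ℂ) :=
  S hA {i | hA.eigenvalues i < 0}

lemma finrank_negSpace :
    Module.finrank ℂ (negSpace hA) = Fintype.card {i // hA.eigenvalues i < 0} := by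
  classical
  exact finrank_S hA _

lemma negSpace_neg {x : ι → ℂ} (hx : x ∈ negSpace hA) (hx0 : x ≠ 0) : q A x < 0 :=
  q_neg hA (fun i hi => hi) hx hx0

lemma negSpace_nonpos {x : ι → ℂ} (hx : x ∈ negSpace hA) : q A x ≤ 0 :=
  q_nonpos hA (fun i hi => hi.le) hx


section Blocks

variable {α β : Type*} [Fintype α] [Fintype β] [DecidableEq α] [DecidableEq β]

/-- embedding of first block coordinates -/
def emb1 : (α → ℂ) →ₗ[ℂ] ((α ⊕ β) → ℂ) where
  toFun x := Sum.elim x 0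
  map_add' x y := by ext (i | i) <;> simp
  map_smul' c x := by ext (i | i) <;> simp

/-- embedding of second block coordinates -/
def emb2 : (β → ℂ) →ₗ[ℂ] ((α ⊕ β) → ℂ) where
  toFun x := Sum.elim 0 x
  map_add' x y := by ext (i | i) <;> simp
  map_smul' c x := by ext (i | i) <;> simp

lemma q_emb1 (M : Matrix (α ⊕ β) (α ⊕ β) ℂ) (v : α → ℂ) :
    q M (emb1 v) = q M.toBlocks₁₁ v := by
  simp [q, emb1, dotProduct, Matrix.mulVec, Fintype.sum_sum_type,
    Matrix.toBlocks₁₁, Finset.mul_sum]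

lemma q_emb2 (M : Matrix (α ⊕ β) (α ⊕ β) ℂ) (w : β → ℂ) :
    q M (emb2 w) = q M.toBlocks₂₂ w := by
  simp [q, emb2, dotProduct, Matrix.mulVec, Fintype.sum_sum_type,
    Matrix.toBlocks₂₂, Finset.mul_sum]

lemma dot_emb1_emb2 (v : α → ℂ) (w : β → ℂ) :
    star (emb1 (β := β) v) ⬝ᵥ emb2 w = 0 := by
  simp [emb1, emb2, dotProduct, Fintype.sum_sum_type]


/-- restricting a subspace to the first block coordinates, on the part where the second
block coordinates vanish -/
lemma block_restrict (U : Submodule ℂ ((α ⊕ β) → ℂ)) :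
    ∃ V : Submodule ℂ (α → ℂ),
      Module.finrank ℂ U ≤ Module.finrank ℂ V + Fintype.card β ∧
      ∀ v ∈ V, emb1 (β := β) v ∈ U := by
  set Lr : U →ₗ[ℂ] (β → ℂ) := (LinearMap.funLeft ℂ ℂ Sum.inr).comp U.subtype with hLr
  set g : ↥(LinearMap.ker Lr) →ₗ[ℂ] (α → ℂ) :=
    ((LinearMap.funLeft ℂ ℂ Sum.inl).comp U.subtype).comp (LinearMap.ker Lr).subtype
      with hg
  have hker : ∀ z : ↥(LinearMap.ker Lr), ∀ i, ((z : U) : (α ⊕ β) → ℂ) (Sum.inr i) = 0 := by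
    intro z i
    have h := z.2
    rw [LinearMap.mem_ker] at h
    exact congrFun h i
  have hy : ∀ z : ↥(LinearMap.ker Lr), ((z : U) : (α ⊕ β) → ℂ) = emb1 (g z) := by
    intro z
    ext (i | i)
    · rfl
    · exact hker z i
  have hginj : Function.Injective g := by
    intro x y hxy
    apply Subtype.ext; apply Subtype.ext
    rw [hy x, hy y, hxy]
  refine ⟨LinearMap.range g, ?_, ?_⟩
  · have hrank := LinearMap.finrank_range_add_finrank_ker Lr
    have hrle : Module.finrank ℂ (LinearMap.range Lr) ≤ Fintype.card β := by
      have h := (LinearMap.range Lr).finrank_le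
      rwa [Module.finrank_fintype_fun_eq_card] at h
    have hfg : Module.finrank ℂ (LinearMap.ker Lr)
        = Module.finrank ℂ (LinearMap.range g) :=
      LinearEquiv.finrank_eq (LinearEquiv.ofInjective g hginj)
    omega
  · rintro v ⟨z, rfl⟩
    rw [← hy z]
    exact (z : U).2

end Blocks

end Stmt16Aux

set_option maxHeartbeats 1000000 in
set_option synthInstance.maxHeartbeats 500000 in
open Stmt16Aux in
theorem stmt_16 (p k : ℕ) (P : Matrix (Fin p ⊕ Fin k) (Fin p ⊕ Fin k) ℂ)
    (hP : P.IsHermitian) (hPu : IsUnit P)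
    (hneg : (-(P⁻¹).toBlocks₂₂).PosSemidef) :
    ∀ h11 : (P.toBlocks₁₁).IsHermitian,
      Fintype.card {i // h11.eigenvalues i < 0} =
        Fintype.card {i // hP.eigenvalues i < 0} - k := by
  intro h11
  classical
  set m : ℕ := Fintype.card {i // hP.eigenvalues i < 0} with hm
  set m₁ : ℕ := Fintype.card {i // h11.eigenvalues i < 0} with hm₁
  have hdet : IsUnit P.det := (Matrix.isUnit_iff_isUnit_det P).mp hPu
  have hPinv : P * P⁻¹ = 1 := Matrix.mul_nonsing_inv P hdet
  -- eigenvalues of P are nonzero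
  have hinv : ∀ i, hP.eigenvalues i ≠ 0 := by
    intro i hi
    have hd := hP.det_eq_prod_eigenvalues
    rw [Finset.prod_eq_zero (Finset.mem_univ i) (by rw [hi]; simp)] at hd
    exact hdet.ne_zero hd
  -- the nonpositivity of the quadratic form of (P⁻¹).toBlocks₂₂
  have hq22 : ∀ w : Fin k → ℂ, q ((P⁻¹).toBlocks₂₂) w ≤ 0 := by
    intro w
    have h := hneg.dotProduct_mulVec_nonneg w
    rw [Matrix.neg_mulVec, dotProduct_neg] at h
    exact neg_nonneg.mp (by simpa [q] using h)
  -- L sends w to P⁻¹ *ᵥ emb2 w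
  set L : (Fin k → ℂ) →ₗ[ℂ] ((Fin p ⊕ Fin k) → ℂ) :=
    (Matrix.mulVecLin P⁻¹).comp (emb2 (α := Fin p)) with hL
  have hPL : ∀ w, P *ᵥ L w = emb2 w := by
    intro w
    simp only [hL, LinearMap.comp_apply, Matrix.mulVecLin_apply, Matrix.mulVec_mulVec,
      hPinv, Matrix.one_mulVec]
  have hLinj : Function.Injective L := by
    intro w w' h
    have h2 : emb2 (α := Fin p) w = emb2 w' := by
      rw [← hPL w, ← hPL w', h]
    have := congrArg (fun f => f ∘ Sum.inr) h2
    ext i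
    exact congrFun this i
  -- q P (L w) = q (P⁻¹).toBlocks₂₂ w ≤ 0
  have hqL : ∀ w, q P (L w) = q ((P⁻¹).toBlocks₂₂) w := by
    intro w
    have e1 : q P (L w) = star (L w) ⬝ᵥ emb2 w := by
      rw [q, hPL w]
    rw [e1, Matrix.star_dotProduct]
    have e2 : star (emb2 (α := Fin p) w) ⬝ᵥ L w = q ((P⁻¹).toBlocks₂₂) w := by
      have : star (emb2 (α := Fin p) w) ⬝ᵥ L w = q P⁻¹ (emb2 w) := rfl
      rw [this, q_emb2]
    rw [e2]
    have h := hq22 w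
    have him : (q ((P⁻¹).toBlocks₂₂) w).im = 0 := by
      rw [Complex.le_def] at h
      exact h.2
    exact Complex.conj_eq_iff_im.mpr him
  have hqLle : ∀ w, q P (L w) ≤ 0 := fun w => (hqL w) ▸ hq22 w
  -- cross terms vanish
  have hcross1 : ∀ (v : Fin p → ℂ) (w : Fin k → ℂ),
      star (emb1 (β := Fin k) v) ⬝ᵥ (P *ᵥ L w) = 0 := by
    intro v w
    rw [hPL w]
    exact dot_emb1_emb2 v w
  have hcross2 : ∀ (v : Fin p → ℂ) (w : Fin k → ℂ),
      star (L w) ⬝ᵥ (P *ᵥ emb1 v) = 0 := by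
    intro v w
    rw [Matrix.star_dotProduct]
    have : star (P *ᵥ emb1 (β := Fin k) v) ⬝ᵥ L w
        = star (emb1 (β := Fin k) v) ⬝ᵥ (P *ᵥ L w) := by
      rw [Matrix.star_mulVec, ← Matrix.dotProduct_mulVec, hP.eq]
    rw [this, hcross1]
    simp
  -- V' : image of negative eigenspace of P₁₁
  have hemb1inj : Function.Injective (emb1 (α := Fin p) (β := Fin k)) := by
    intro v v' h
    ext i
    exact congrFun (congrArg (fun f => f ∘ Sum.inl) h) i
  set V : Submodule ℂ (Fin p → ℂ) := negSpace h11 with hV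
  set V' : Submodule ℂ ((Fin p ⊕ Fin k) → ℂ) := V.map (emb1 (β := Fin k)) with hV'
  set W : Submodule ℂ ((Fin p ⊕ Fin k) → ℂ) := LinearMap.range L with hW
  have hfV' : Module.finrank ℂ V' = m₁ := by
    rw [hV', ← (Submodule.equivMapOfInjective _ hemb1inj V).finrank_eq, hV,
      finrank_negSpace]
  have hfW : Module.finrank ℂ W = k := by
    rw [hW, ← LinearEquiv.finrank_eq (LinearEquiv.ofInjective L hLinj),
      Module.finrank_fintype_fun_eq_card, Fintype.card_fin]
  -- V' ⊓ W = ⊥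
  have hdisj : V' ⊓ W = ⊥ := by
    rw [Submodule.eq_bot_iff]
    rintro x ⟨hxV, hxW⟩
    obtain ⟨v, hv, rfl⟩ := hxV
    obtain ⟨w, hw⟩ := hxW
    have h1 : q P.toBlocks₁₁ v = 0 := by
      rw [← q_emb1 P v, q, ← hw, hPL w, hw, dot_emb1_emb2]
    by_cases hv0 : v = 0
    · rw [hv0]; simp
    · exact absurd h1 (negSpace_neg h11 hv hv0).ne
  -- everything in V' ⊔ W has nonpositive quadratic form
  have hqsup : ∀ x ∈ V' ⊔ W, q P x ≤ 0 := by
    intro x hx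
    rw [Submodule.mem_sup] at hx
    obtain ⟨a, ha, b, hb, rfl⟩ := hx
    obtain ⟨v, hv, rfl⟩ := ha
    obtain ⟨w, rfl⟩ := hb
    have expand : q P (emb1 v + L w)
        = q P (emb1 v) + star (emb1 (β := Fin k) v) ⬝ᵥ (P *ᵥ L w)
          + star (L w) ⬝ᵥ (P *ᵥ emb1 v) + q P (L w) := by
      simp only [q, Matrix.mulVec_add, star_add, add_dotProduct,
        dotProduct_add]
      ring
    rw [expand, hcross1, hcross2, add_zero, add_zero]
    have h1 : q P (emb1 v) ≤ 0 := by
      rw [q_emb1]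
      exact negSpace_nonpos h11 hv
    exact add_nonpos h1 (hqLle w)
  -- direction 1 : m₁ + k ≤ m
  have hdir1 : m₁ + k ≤ m := by
    have hfr : Module.finrank ℂ ↥(V' ⊔ W) = m₁ + k := by
      have := Submodule.finrank_sup_add_finrank_inf_eq V' W
      rw [hdisj, finrank_bot, add_zero, hfV', hfW] at this
      exact this
    have := finrank_le_negCount' hP hinv (V' ⊔ W) hqsup
    rw [hfr] at this
    exact this
  -- direction 2 : m - k ≤ m₁
  have hdir2 : m ≤ m₁ + k := by
    obtain ⟨V2, hV2le, hV2mem⟩ := block_restrict (β := Fin k) (negSpace hP)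
    have hMneg : ∀ x ∈ V2, x ≠ 0 → q P.toBlocks₁₁ x < 0 := by
      intro x hx hx0
      have hne : emb1 (β := Fin k) x ≠ 0 := by
        intro h0
        exact hx0 (by ext i; exact congrFun h0 (Sum.inl i))
      have := negSpace_neg hP (hV2mem x hx) hne
      rwa [q_emb1] at this
    have hle : Module.finrank ℂ V2 ≤ m₁ := finrank_le_negCount h11 _ hMneg
    have hfU : Module.finrank ℂ (negSpace hP) = m := finrank_negSpace hP
    rw [hfU, Fintype.card_fin] at hV2le
    omega
  omega
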